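/- The implicit embedded method of SSP-LDIRK3(3,3,2) is A-stable but not L-stable: with A = [[γ,0,0],[1−2γ,γ,0],[1/2−γ,0,γ]], γ = 1 − √2/2, and embedded weights b̂ = (−2/17, 2/13, 213/221), for every z ∈ ℂ with Re z ≤ 0 the matrix I − zA is invertible and the embedded stability function R̂(z) = 1 + z·b̂ᵀ(I − zA)⁻¹𝟙 satisfies |R̂(z)| ≤ 1; moreover b̂ᵀA⁻¹𝟙 ≠ 1, so R̂(z) does not tend to 0 as |z| → ∞. -/

import Mathlib

open Matrix

lemma aux_gbounds : (0.2928:ℝ) ≤ 1 - Real.sqrt 2 / 2 ∧ (1:ℝ) - Real.sqrt 2 / 2 ≤ 0.293 ∧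
    ((1:ℝ) - Real.sqrt 2 / 2)^2 = 2*(1 - Real.sqrt 2 / 2) - 1/2 := by
  have h2 : Real.sqrt 2 ^ 2 = 2 := Real.sq_sqrt (by norm_num)
  have hpos : (0:ℝ) ≤ Real.sqrt 2 := Real.sqrt_nonneg 2
  refine ⟨by nlinarith, by nlinarith, by nlinarith⟩

lemma aux_c_pos (g x : ℝ) (hg : g^2 = 2*g - 1/2) (hgu : g ≤ 0.293) :
    0 < 1 + (1-2*g)*x + (30*(1-2*g)/221)*x^2 := by
  nlinarith [sq_nonneg (2*(30*(1-2*g)/221)*x + (1-2*g)), sq_nonneg x]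

lemma aux_key (g x y : ℝ) (hg : g^2 = 2*g - 1/2) (hgl : 0.2928 ≤ g) (hgu : g ≤ 0.293)
    (hx : x ≤ 0) :
    (1 + (1-2*g)*x + (30*(1-2*g)/221)*(x^2-y^2))^2 + ((1-2*g)*y + 2*(30*(1-2*g)/221)*x*y)^2
      ≤ ((1 - g*x)^2 + (g*y)^2)^2 := by
  set q : ℝ := 30*(1-2*g)/221 with hq
  have hqpos : 0 < q := by rw [hq]; nlinarith
  have hc : 0 < 1 + (1-2*g)*x + q*x^2 := aux_c_pos g x hg hgu
  have h4 : 0 ≤ g^4 - q^2 := by rw [hq]; nlinarith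
  have hL : 0 ≤ 2*g^2*(1-g*x)^2 + 2*q*(1 + (1-2*g)*x + q*x^2) - ((1-2*g)+2*q*x)^2 := by
    rw [hq]; nlinarith [sq_nonneg x, mul_nonneg (neg_nonneg.2 hx) (neg_nonneg.2 hx)]
  have hac : 0 ≤ (1-g*x)^2 - (1 + (1-2*g)*x + q*x^2) := by
    rw [hq]; nlinarith [sq_nonneg x]
  nlinarith [mul_nonneg h4 (sq_nonneg (y*y)), mul_nonneg hL (sq_nonneg y),
    mul_nonneg hac (by nlinarith [sq_nonneg (1-g*x)] : (0:ℝ) ≤ (1-g*x)^2 + (1 + (1-2*g)*x + q*x^2)),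
    sq_nonneg y]

lemma aux_ne (G : ℝ) (hgq : G^2 = 2*G-1/2) (hgl : 0.2928 ≤ G) (hgu : G ≤ 0.293)
    (h0 : 0 < G) :
    -(2/17)*(1/G) + (2/13)*((3*G-1)/G^2) + (213/221)*((2*G-1/2)/G^2) ≠ 1 := by
  intro h
  have h3 : G^3 = 7*G/2 - 1 := by linear_combination (G+2)*hgq
  have h4 : G^4 = 6*G - 7/4 := by linear_combination (G^2+2*G+7/2)*hgq
  have h5 : G^5 = 41*G/4 - 3 := by linear_combination (G^3+2*G^2+7*G/2+6)*hgq
  have hne : G ≠ 0 := ne_of_gt h0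
  field_simp at h
  nlinarith [h, h3, h4, h5, hgq, hgl, hgu]

set_option maxHeartbeats 1600000 in
theorem stmt_14 :
    let g : ℝ := 1 - Real.sqrt 2 / 2
    let A : Matrix (Fin 3) (Fin 3) ℝ := !![g, 0, 0; 1 - 2*g, g, 0; 1/2 - g, 0, g]
    let bhat : Fin 3 → ℝ := ![-(2/17), 2/13, 213/221]
    let AC : Matrix (Fin 3) (Fin 3) ℂ := A.map Complex.ofReal
    let bC : Fin 3 → ℂ := fun i => (bhat i : ℂ)
    let Rhat : ℂ → ℂ := fun z => 1 + z * (bC ⬝ᵥ ((1 - z • AC)⁻¹ *ᵥ 1))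
    (∀ z : ℂ, z.re ≤ 0 → IsUnit (1 - z • AC) ∧ ‖Rhat z‖ ≤ 1) ∧
      bhat ⬝ᵥ (A⁻¹ *ᵥ 1) ≠ 1 ∧
      ¬ Filter.Tendsto Rhat (Filter.comap (fun w : ℂ => ‖w‖) Filter.atTop) (nhds 0) := by
  intro g A bhat AC bC Rhat
  obtain ⟨hgl, hgu, hgq⟩ := aux_gbounds
  have hg0 : (0:ℝ) < g := by change (0:ℝ) < 1 - Real.sqrt 2 / 2; linarith
  have hgq' : g^2 = 2*g - 1/2 := hgq
  have hgl' : (0.2928:ℝ) ≤ g := hgl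
  have hgu' : g ≤ (0.293:ℝ) := hgu
  have hgC : (g:ℂ)^2 = 2*(g:ℂ) - 1/2 := by
    rw [← Complex.ofReal_pow, hgq']; push_cast; ring
  -- explicit form of 1 - z • AC
  have hMform : ∀ z : ℂ, 1 - z • AC =
      !![1 - z*(g:ℂ), 0, 0; -(z*(1-2*(g:ℂ))), 1 - z*(g:ℂ), 0;
         -(z*(1/2-(g:ℂ))), 0, 1 - z*(g:ℂ)] := by
    intro z
    ext i j
    fin_cases i <;> fin_cases j <;>
      simp [A, AC, Matrix.map_apply, Matrix.one_apply] <;> push_cast <;> ring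
  have hdet : ∀ z : ℂ, (1 - z • AC).det = (1 - z*(g:ℂ))^3 := by
    intro z
    rw [hMform z]
    simp [Matrix.det_fin_three]
    ring
  have hwne : ∀ z : ℂ, z.re ≤ 0 → (1 - z*(g:ℂ)) ≠ 0 := by
    intro z hz h
    have hre : (1 - z*(g:ℂ)).re = 0 := by rw [h]; simp
    simp [Complex.sub_re, Complex.mul_re] at hre
    nlinarith [hre]
  have hunit : ∀ z : ℂ, z.re ≤ 0 → IsUnit (1 - z • AC) := by
    intro z hz
    rw [Matrix.isUnit_iff_isUnit_det, hdet z, isUnit_iff_ne_zero]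
    exact pow_ne_zero 3 (hwne z hz)
  -- stability function formula
  have hRform : ∀ z : ℂ, z.re ≤ 0 →
      Rhat z = (1 + (1-2*(g:ℂ))*z + (30*(1-2*(g:ℂ))/221)*z^2) / (1 - z*(g:ℂ))^2 := by
    intro z hz
    have hw : (1 - z*(g:ℂ)) ≠ 0 := hwne z hz
    set w : ℂ := 1 - z*(g:ℂ) with hwdef
    have hw2 : w^2 ≠ 0 := pow_ne_zero 2 hw
    set xv : Fin 3 → ℂ :=
      ![w/w^2, (w + z*(1-2*(g:ℂ)))/w^2, (w + z*(1/2-(g:ℂ)))/w^2] with hxv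
    have hmul : (1 - z • AC) *ᵥ xv = 1 := by
      rw [hMform z]
      funext i
      fin_cases i <;>
        · simp [hxv, Matrix.mulVec, dotProduct, Fin.sum_univ_three]
          rw [← hwdef]
          field_simp
          all_goals ring
    have hinv : (1 - z • AC)⁻¹ *ᵥ (1 : Fin 3 → ℂ) = xv := by
      rw [← hmul, Matrix.mulVec_mulVec,
        Matrix.nonsing_inv_mul _ ((Matrix.isUnit_iff_isUnit_det _).mp (hunit z hz)),
        Matrix.one_mulVec]
    show 1 + z * (bC ⬝ᵥ ((1 - z • AC)⁻¹ *ᵥ 1)) = _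
    rw [hinv]
    have hd : bC ⬝ᵥ xv = (-(2/17)*w + (2/13)*(w + z*(1-2*(g:ℂ)))
        + (213/221)*(w + z*(1/2-(g:ℂ))))/w^2 := by
      simp only [bC, bhat, hxv, dotProduct, Fin.sum_univ_three, Matrix.cons_val_zero,
        Matrix.cons_val_one, Matrix.head_cons, Matrix.cons_val_two, Matrix.tail_cons]
      push_cast
      field_simp
    rw [hd, eq_div_iff hw2]
    have e : ∀ X : ℂ, (1 + z * (X / w^2)) * w^2 = w^2 + z*X := by
      intro X; rw [add_mul, one_mul, mul_assoc, div_mul_cancel₀ _ hw2]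
    rw [e, hwdef]
    linear_combination z^2 * hgC
  -- abs bound
  have habs : ∀ z : ℂ, z.re ≤ 0 → ‖Rhat z‖ ≤ 1 := by
    intro z hz
    rw [hRform z hz]
    set N : ℂ := 1 + (1-2*(g:ℂ))*z + (30*(1-2*(g:ℂ))/221)*z^2 with hN
    set w : ℂ := 1 - z*(g:ℂ) with hwdef
    have hw : w ≠ 0 := hwne z hz
    have hwabs : 0 < ‖w‖ := norm_pos_iff.mpr hw
    have hNre : N.re = 1 + (1-2*g)*z.re + (30*(1-2*g)/221)*(z.re^2 - z.im^2) := by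
      simp [hN, Complex.add_re, Complex.mul_re, Complex.mul_im, pow_two] <;> ring
    have hNim : N.im = (1-2*g)*z.im + 2*(30*(1-2*g)/221)*z.re*z.im := by
      simp [hN, Complex.add_im, Complex.mul_re, Complex.mul_im, pow_two] <;> ring
    have hwre : w.re = 1 - g*z.re := by
      simp [hwdef, Complex.sub_re, Complex.mul_re] <;> ring
    have hwim : w.im = -(g*z.im) := by
      simp [hwdef, Complex.sub_im, Complex.mul_im] <;> ring
    have hkey := aux_key g z.re z.im hgq' hgl' hgu' hz
    have hsq : ‖N‖^2 ≤ (‖w‖^2)^2 := by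
      rw [Complex.sq_norm, Complex.sq_norm, Complex.normSq_apply, Complex.normSq_apply,
        hNre, hNim, hwre, hwim]
      ring_nf
      ring_nf at hkey
      linarith [hkey]
    have hle : ‖N‖ ≤ ‖w‖^2 := by
      nlinarith [norm_nonneg N, sq_nonneg ‖w‖, hsq]
    rw [norm_div, norm_pow]
    rw [div_le_one (by positivity)]
    exact hle
  refine ⟨fun z hz => ⟨hunit z hz, habs z hz⟩, ?_, ?_⟩
  · -- b̂ᵀ A⁻¹ 1 ≠ 1
    have hdetA : A.det = g^3 := by
      simp [A, Matrix.det_fin_three]; ring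
    have hgne : g ≠ 0 := ne_of_gt hg0
    set yv : Fin 3 → ℝ := ![1/g, (3*g-1)/g^2, (2*g-1/2)/g^2] with hyv
    have hmul : A *ᵥ yv = 1 := by
      funext i
      fin_cases i <;>
        · simp [A, hyv, Matrix.mulVec, dotProduct, Fin.sum_univ_three]
          field_simp
          try ring
    have hinv : A⁻¹ *ᵥ (1 : Fin 3 → ℝ) = yv := by
      rw [← hmul, Matrix.mulVec_mulVec,
        Matrix.nonsing_inv_mul _ (by rw [hdetA]; exact isUnit_iff_ne_zero.mpr (pow_ne_zero 3 hgne)),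
        Matrix.one_mulVec]
    rw [hinv]
    have hd : bhat ⬝ᵥ yv = -(2/17)*(1/g) + (2/13)*((3*g-1)/g^2) + (213/221)*((2*g-1/2)/g^2) := by
      simp [bhat, hyv, dotProduct, Fin.sum_univ_three]
      try ring
    rw [hd]
    exact aux_ne g hgq' hgl' hgu' hg0
  · -- not tendsto 0
    intro H
    have hcomp : Filter.Tendsto (fun r : ℝ => -(r:ℂ)) Filter.atTop
        (Filter.comap (fun w : ℂ => ‖w‖) Filter.atTop) := by
      rw [Filter.tendsto_comap_iff]
      have heq : ((fun w : ℂ => ‖w‖) ∘ fun r : ℝ => -(r:ℂ)) = fun r : ℝ => |r| := by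
        funext r; simp
      rw [heq]
      exact Filter.tendsto_abs_atTop_atTop
    have H2 : Filter.Tendsto (fun r : ℝ => Rhat (-(r:ℂ))) Filter.atTop (nhds 0) := H.comp hcomp
    have H3 : Filter.Tendsto (fun r : ℝ => ‖Rhat (-(r:ℂ))‖) Filter.atTop (nhds 0) := by
      have := (continuous_norm.tendsto 0).comp H2
      simpa [Function.comp_def] using this
    have hev : ∀ᶠ r : ℝ in Filter.atTop, ‖Rhat (-(r:ℂ))‖ < 1/2 := by
      have : ∀ᶠ x : ℝ in nhds 0, x < 1/2 := eventually_lt_nhds (by norm_num)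
      exact H3.eventually this
    have hlow : ∀ r : ℝ, 100 ≤ r → 1/2 ≤ ‖Rhat (-(r:ℂ))‖ := by
      intro r hr
      have hzre : (-(r:ℂ)).re ≤ 0 := by simp; linarith
      rw [hRform _ hzre]
      have hnum : (1 + (1-2*(g:ℂ))*(-(r:ℂ)) + (30*(1-2*(g:ℂ))/221)*(-(r:ℂ))^2)
          = ((1 - (1-2*g)*r + (30*(1-2*g)/221)*r^2 : ℝ) : ℂ) := by
        push_cast; ring
      have hden : (1 - (-(r:ℂ))*(g:ℂ))^2 = (((1 + g*r)^2 : ℝ) : ℂ) := by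
        push_cast; ring
      rw [hnum, hden, norm_div, Complex.norm_real, Complex.norm_real, Real.norm_eq_abs, Real.norm_eq_abs]
      have hnpos : (0:ℝ) < 1 - (1-2*g)*r + (30*(1-2*g)/221)*r^2 := by nlinarith
      have hdpos : (0:ℝ) < (1 + g*r)^2 := by
        have : (0:ℝ) < 1 + g*r := by nlinarith
        positivity
      rw [abs_of_pos hnpos, abs_of_pos hdpos, le_div_iff₀ hdpos]
      nlinarith
    obtain ⟨r, hr1, hr2⟩ := (hev.and (Filter.eventually_ge_atTop 100)).exists
    exact absurd (hlow r hr2) (not_le.mpr hr1)
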